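/- Let S = (P, φ) be a SUT model, t a strength, π ⊆ P a set of exactly t parameters, and τ_1, …, τ_r the distinct allowed t-tuples whose domain is π. If Υ is a mixed covering array CA(N;t,S), then N ≥ r and there exists a permutation of the tests of Υ that is again a CA(N;t,S) and in which, for every 1 ≤ i ≤ r, the i-th test covers τ_i. Consequently, fixing tuple τ_i in test i for i = 1, …, r (fixed-tuple symmetry breaking) preserves the existence of a covering array of any size N ≥ r, and in particular preserves CAN(t,S). -/

import Mathlib

attribute [local instance] Classical.propDecidable

/-- A full assignment `υ` covers a tuple (partial assignment) `τ`
if they assign the same value to every parameter in the domain of `τ`. -/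
def covers {P : Type} {d : P → Type} (υ : ∀ p, d p) (τ : ∀ p, Option (d p)) : Prop :=
  ∀ (p : P) (v : d p), τ p = some v → υ p = v

/-- The set of parameters on which the tuple `τ` is defined. -/
noncomputable def tupleDom {P : Type} [Fintype P] {d : P → Type}
    (τ : ∀ p, Option (d p)) : Finset P :=
  Finset.univ.filter fun p => (τ p).isSome

/-- The finite set of allowed `t`-tuples of the SUT model `S = (P, d, φ)`:
tuples defined on exactly `t` parameters that are covered by some
accepted full assignment in `φ`. -/
noncomputable def allowedTuples {P : Type} [Fintype P] [DecidableEq P] {d : P → Type}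
    [∀ p, Fintype (d p)] (φ : Finset (∀ p, d p)) (t : ℕ) :
    Finset (∀ p, Option (d p)) :=
  Finset.univ.filter fun τ => (tupleDom τ).card = t ∧ ∃ A ∈ φ, covers A τ

/-- `Υ` is a mixed covering array with constraints `CA(N; t, S)`:
a sequence of `N` test cases (full assignments accepted by `φ`) such that
every allowed `t`-tuple is covered by at least one of them. -/
def isCA {P : Type} [Fintype P] [DecidableEq P] {d : P → Type}
    [∀ p, Fintype (d p)] (φ : Finset (∀ p, d p)) (t : ℕ) {N : ℕ}
    (Υ : Fin N → ∀ p, d p) : Prop :=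
  (∀ i, Υ i ∈ φ) ∧ ∀ τ ∈ allowedTuples φ t, ∃ i, covers (Υ i) τ

/-- The covering array number `CAN(t, S)`: the least `N` for which a
`CA(N; t, S)` exists. -/
noncomputable def CAN {P : Type} [Fintype P] [DecidableEq P] {d : P → Type}
    [∀ p, Fintype (d p)] (φ : Finset (∀ p, d p)) (t : ℕ) : ℕ :=
  sInf {N | ∃ Υ : Fin N → ∀ p, d p, isCA φ t Υ}

/-- The tuple number `T(N; t, S)`: the maximum number of allowed `t`-tuples
coverable by a sequence of `N` test cases. -/
noncomputable def TN {P : Type} [Fintype P] [DecidableEq P] {d : P → Type}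
    [∀ p, Fintype (d p)] (φ : Finset (∀ p, d p)) (t N : ℕ) : ℕ :=
  sSup {k | ∃ Υ : Fin N → ∀ p, d p, (∀ i, Υ i ∈ φ) ∧
    k = ((allowedTuples φ t).filter fun τ => ∃ i, covers (Υ i) τ).card}

/-- Two tuples with the same domain covered by the same full assignment are equal. -/
lemma covers_eq_of_same_dom {P : Type} [Fintype P] {d : P → Type}
    (υ : ∀ p, d p) (τ₁ τ₂ : ∀ p, Option (d p))
    (h1 : covers υ τ₁) (h2 : covers υ τ₂)
    (hd : tupleDom τ₁ = tupleDom τ₂) : τ₁ = τ₂ := by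
  classical
  funext p
  have hmem : p ∈ tupleDom τ₁ ↔ p ∈ tupleDom τ₂ := by rw [hd]
  simp only [tupleDom, Finset.mem_filter, Finset.mem_univ, true_and,
    Option.isSome_iff_exists] at hmem
  cases hv1 : τ₁ p with
  | none =>
    cases hv2 : τ₂ p with
    | none => rfl
    | some v => exact absurd (hmem.mpr ⟨v, hv2⟩) (by simp [hv1])
  | some v =>
    obtain ⟨w, hw⟩ := hmem.mp ⟨v, hv1⟩
    have e1 := h1 p v hv1
    have e2 := h2 p w hw
    rw [hw, e1.symm.trans e2]

/-- Any injective map `Fin r → Fin N` extends to a permutation of `Fin N`. -/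
lemma exists_perm_extend {r N : ℕ} (h : r ≤ N) (f : Fin r → Fin N)
    (hf : Function.Injective f) :
    ∃ σ : Equiv.Perm (Fin N), ∀ i, σ (Fin.castLE h i) = f i := by
  classical
  set g : Fin r → Fin N := Fin.castLE h with hg_def
  have hg : Function.Injective g := Fin.castLE_injective h
  let e1 : Set.range g ≃ Set.range f :=
    (Equiv.ofInjective g hg).symm.trans (Equiv.ofInjective f hf)
  have hcard : Fintype.card {x : Fin N // ¬ x ∈ Set.range g}
      = Fintype.card {x : Fin N // ¬ x ∈ Set.range f} := by
    have c1 : Fintype.card {x : Fin N // x ∈ Set.range g} = r := by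
      rw [Fintype.card_congr (Equiv.ofInjective g hg).symm, Fintype.card_fin]
    have c2 : Fintype.card {x : Fin N // x ∈ Set.range f} = r := by
      rw [Fintype.card_congr (Equiv.ofInjective f hf).symm, Fintype.card_fin]
    rw [Fintype.card_subtype_compl, Fintype.card_subtype_compl, c1, c2]
  let e2 : {x : Fin N // ¬ x ∈ Set.range g} ≃ {x : Fin N // ¬ x ∈ Set.range f} :=
    Fintype.equivOfCardEq hcard
  refine ⟨(Equiv.sumCompl (· ∈ Set.range g)).symm.trans
    ((e1.sumCongr e2).trans (Equiv.sumCompl (· ∈ Set.range f))), fun i => ?_⟩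
  have h1 : (Equiv.sumCompl (· ∈ Set.range g)).symm (g i)
      = Sum.inl ⟨g i, ⟨i, rfl⟩⟩ :=
    Equiv.sumCompl_symm_apply_of_pos ⟨i, rfl⟩
  have h2 : e1 ⟨g i, ⟨i, rfl⟩⟩ = ⟨f i, ⟨i, rfl⟩⟩ := by
    have : (⟨g i, ⟨i, rfl⟩⟩ : Set.range g) = Equiv.ofInjective g hg i := by
      apply Subtype.ext; rfl
    simp only [e1, Equiv.trans_apply, this, Equiv.symm_apply_apply]
    apply Subtype.ext; rfl
  simp only [Equiv.trans_apply, h1, Equiv.sumCongr_apply, Sum.map_inl, h2]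
  rfl

/-- Main lemma: reordering a covering array so test `i` covers tuple `τs i`. -/
lemma exists_perm_CA
    {P : Type} [Fintype P] [DecidableEq P]
    {d : P → Type} [∀ p, Fintype (d p)]
    (φ : Finset (∀ p, d p)) (t : ℕ) (π : Finset P)
    (r : ℕ) (τs : Fin r → ∀ p, Option (d p))
    (hinj : Function.Injective τs)
    (hrange : ∀ τ, (τ ∈ allowedTuples φ t ∧ tupleDom τ = π) ↔ ∃ i, τs i = τ)
    (N : ℕ) (Υ : Fin N → ∀ p, d p) (hCA : isCA φ t Υ) :
    ∃ (h : r ≤ N) (σ : Equiv.Perm (Fin N)),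
      isCA φ t (fun j => Υ (σ j)) ∧
      ∀ i : Fin r, covers (Υ (σ (Fin.castLE h i))) (τs i) := by
  classical
  have hprop : ∀ i : Fin r, τs i ∈ allowedTuples φ t ∧ tupleDom (τs i) = π :=
    fun i => (hrange (τs i)).mpr ⟨i, rfl⟩
  have hcov : ∀ i : Fin r, ∃ j, covers (Υ j) (τs i) :=
    fun i => hCA.2 (τs i) (hprop i).1
  choose f hfcov using hcov
  have hfinj : Function.Injective f := by
    intro i₁ i₂ hij
    apply hinj
    apply covers_eq_of_same_dom (Υ (f i₁)) _ _ (hfcov i₁) (by rw [hij]; exact hfcov i₂)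
    rw [(hprop i₁).2, (hprop i₂).2]
  have hrN : r ≤ N := by
    have := Fintype.card_le_of_injective f hfinj
    simpa using this
  obtain ⟨σ, hσ⟩ := exists_perm_extend hrN f hfinj
  refine ⟨hrN, σ, ⟨fun j => hCA.1 _, fun τ hτ => ?_⟩, fun i => by rw [hσ]; exact hfcov i⟩
  obtain ⟨j, hj⟩ := hCA.2 τ hτ
  exact ⟨σ.symm j, by simpa using hj⟩

/-- **fixed-tuple symmetry breaking.**  Let `π ⊆ P` be a set
of exactly `t` parameters and `τs 0, …, τs (r-1)` an enumeration (without
repetitions) of the allowed `t`-tuples whose domain is `π`.  If `Υ` is a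
`CA(N;t,S)`, then `r ≤ N` and some permutation of the tests of `Υ` is again
a `CA(N;t,S)` in which, for every `i < r`, the `i`-th test covers `τs i`.
Consequently, fixing tuple `τs i` in test `i` preserves the covering array
number `CAN(t,S)`. -/
theorem fixed_tuple_symmetry_breaking
    {P : Type} [Fintype P] [DecidableEq P]
    {d : P → Type} [∀ p, Fintype (d p)] [∀ p, Nonempty (d p)]
    (φ : Finset (∀ p, d p)) (hφ : φ.Nonempty)
    (t : ℕ) (ht1 : 1 ≤ t) (ht2 : t ≤ Fintype.card P)
    (π : Finset P) (hπ : π.card = t)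
    (r : ℕ) (τs : Fin r → ∀ p, Option (d p))
    (hinj : Function.Injective τs)
    (hrange : ∀ τ, (τ ∈ allowedTuples φ t ∧ tupleDom τ = π) ↔ ∃ i, τs i = τ)
    (N : ℕ) (Υ : Fin N → ∀ p, d p) (hCA : isCA φ t Υ) :
    (∃ (h : r ≤ N) (σ : Equiv.Perm (Fin N)),
      isCA φ t (fun j => Υ (σ j)) ∧
      ∀ i : Fin r, covers (Υ (σ (Fin.castLE h i))) (τs i)) ∧
    CAN φ t = sInf {M | ∃ (hM : r ≤ M) (Υ' : Fin M → ∀ p, d p),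
      isCA φ t Υ' ∧ ∀ i : Fin r, covers (Υ' (Fin.castLE hM i)) (τs i)} := by
  constructor
  · exact exists_perm_CA φ t π r τs hinj hrange N Υ hCA
  · unfold CAN
    congr 1
    ext M
    constructor
    · rintro ⟨Υ', hΥ'⟩
      obtain ⟨hM, σ, hCA', hfix⟩ := exists_perm_CA φ t π r τs hinj hrange M Υ' hΥ'
      exact ⟨hM, fun j => Υ' (σ j), hCA', hfix⟩
    · rintro ⟨hM, Υ', hΥ', -⟩
      exact ⟨Υ', hΥ'⟩
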